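/- Let $X$ be an arbitrary Banach space and $Y$ a Banach space whose unit ball has a strongly exposed point $y_0 \in S_Y$. Then for every $\varepsilon > 0$ there exists a convex combination of slices of the unit ball of $E := X \oplus_1 Y$ that contains $0$ and has diameter at most $4\varepsilon$. In particular $E$ fails the strong diameter 2 property and contains no ccs Daugavet point. -/

import Mathlib

open Metric Set Pointwise Filter Topology

variable {X : Type*} [NormedAddCommGroup X] [NormedSpace ℝ X]

def sliceSet (f : X →L[ℝ] ℝ) (δ : ℝ) : Set X :=
  {y ∈ closedBall (0 : X) 1 | 1 - δ < f y}

def IsSlice (S : Set X) : Prop :=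
  ∃ (f : X →L[ℝ] ℝ) (δ : ℝ), ‖f‖ = 1 ∧ 0 < δ ∧ S = sliceSet f δ

def IsCCS (C : Set X) : Prop :=
  ∃ (n : ℕ) (l : Fin n → ℝ) (S : Fin n → Set X),
    (∀ i, 0 < l i) ∧ (∑ i, l i) = 1 ∧ (∀ i, IsSlice (S i)) ∧
    C = ∑ i, l i • S i

def RelWeakOpen (V : Set X) : Prop :=
  ∃ U : Set X, IsOpen (show Set (WeakSpace ℝ X) from U) ∧ V = U ∩ closedBall 0 1

def weakClosure (A : Set X) : Set X :=
  @closure (WeakSpace ℝ X) _ A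

def SuperDeltaPoint (x : X) : Prop :=
  ∀ V : Set X, RelWeakOpen V → x ∈ V → ∀ ε > 0, ∃ y ∈ V, 2 - ε < ‖x - y‖

def SuperDaugavetPoint (x : X) : Prop :=
  ∀ V : Set X, RelWeakOpen V → V.Nonempty → ∀ ε > 0, ∃ y ∈ V, 2 - ε < ‖x - y‖

def CcsDeltaPoint (x : X) : Prop :=
  ∀ C : Set X, IsCCS C → x ∈ C → ∀ ε > 0, ∃ y ∈ C, 2 - ε < ‖x - y‖

def CcsDaugavetPoint (x : X) : Prop :=
  ∀ C : Set X, IsCCS C → ∀ ε > 0, ∃ y ∈ C, 2 - ε < ‖x - y‖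

set_option maxHeartbeats 1000000 in
theorem ell1_sum_small_ccs {X Y : Type*} [NormedAddCommGroup X] [NormedSpace ℝ X]
    [NormedAddCommGroup Y] [NormedSpace ℝ Y] [CompleteSpace X] [CompleteSpace Y]
    (y₀ : Y) (hy₀ : ‖y₀‖ = 1)
    (g : Y →L[ℝ] ℝ) (hg : ‖g‖ = 1) (hgy₀ : g y₀ = 1)
    (hse : ∀ yn : ℕ → Y, (∀ n, yn n ∈ closedBall (0 : Y) 1) →
      Filter.Tendsto (fun n => g (yn n)) Filter.atTop (nhds 1) →
      Filter.Tendsto (fun n => ‖yn n - y₀‖) Filter.atTop (nhds 0)) :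
    (∀ ε > 0, ∃ C : Set (WithLp 1 (X × Y)),
      IsCCS C ∧ (0 : WithLp 1 (X × Y)) ∈ C ∧ Metric.diam C ≤ 4 * ε) ∧
    (∃ C : Set (WithLp 1 (X × Y)), IsCCS C ∧ Metric.diam C < 2) ∧
    (∀ z : WithLp 1 (X × Y), ‖z‖ = 1 → ¬ CcsDaugavetPoint z) := by
  -- quantitative strong exposedness
  have hgle : ∀ w : Y, g w ≤ ‖w‖ := by
    intro w
    calc g w ≤ |g w| := le_abs_self _
      _ = ‖g w‖ := rfl
      _ ≤ ‖g‖ * ‖w‖ := g.le_opNorm w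
      _ = ‖w‖ := by rw [hg, one_mul]
  have quant : ∀ ε > 0, ∃ δ > 0, ∀ w : Y, ‖w‖ ≤ 1 → 1 - δ < g w → ‖w - y₀‖ < ε := by
    intro ε hε
    by_contra hcon
    push_neg at hcon
    choose w hw1 hw2 hw3 using fun n : ℕ =>
      hcon (1 / ((n : ℝ) + 1)) (by positivity)
    have hmem : ∀ n, w n ∈ closedBall (0 : Y) 1 := fun n => by
      simpa [mem_closedBall, dist_zero_right] using hw1 n
    have htend : Filter.Tendsto (fun n => g (w n)) Filter.atTop (nhds 1) := by
      have h1 : Filter.Tendsto (fun n : ℕ => 1 - 1 / ((n : ℝ) + 1)) Filter.atTop (nhds 1) := by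
        have : Filter.Tendsto (fun n : ℕ => 1 / ((n : ℝ) + 1)) Filter.atTop (nhds 0) :=
          tendsto_one_div_add_atTop_nhds_zero_nat
        simpa using tendsto_const_nhds.sub this
      refine tendsto_of_tendsto_of_tendsto_of_le_of_le h1 tendsto_const_nhds
        (fun n => (hw2 n).le) (fun n => (hgle (w n)).trans (hw1 n))
    have hlim := hse w hmem htend
    have hev : ∀ᶠ n in Filter.atTop, ‖w n - y₀‖ < ε := hlim.eventually (gt_mem_nhds hε)
    obtain ⟨n, hn⟩ := hev.exists
    exact absurd (hw3 n) (not_le.mpr hn)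
  -- the functional on the sum
  set G : WithLp 1 (X × Y) →L[ℝ] ℝ :=
    g.comp ((ContinuousLinearMap.snd ℝ X Y).comp
      (WithLp.prodContinuousLinearEquiv 1 ℝ X Y : WithLp 1 (X × Y) →L[ℝ] X × Y)) with hGdef
  have hGapp : ∀ z : WithLp 1 (X × Y), G z = g z.snd := fun _ => rfl
  have hnorm : ∀ z : WithLp 1 (X × Y), ‖z‖ = ‖z.fst‖ + ‖z.snd‖ := fun z => by
    rw [WithLp.prod_norm_eq_add (by norm_num)]
    norm_num
  set p₀ : WithLp 1 (X × Y) := (WithLp.equiv 1 (X × Y)).symm (0, y₀) with hp₀def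
  have hp₀fst : p₀.fst = (0 : X) := rfl
  have hp₀snd : p₀.snd = y₀ := rfl
  have hp₀norm : ‖p₀‖ = 1 := by rw [hnorm, hp₀fst, hp₀snd, norm_zero, hy₀]; ring
  have hGp₀ : G p₀ = 1 := by rw [hGapp, hp₀snd, hgy₀]
  have hGnorm : ‖G‖ = 1 := by
    refine le_antisymm ?_ ?_
    · refine ContinuousLinearMap.opNorm_le_bound G zero_le_one (fun z => ?_)
      rw [one_mul, hnorm]
      calc ‖G z‖ = ‖g z.snd‖ := by rw [hGapp]
        _ ≤ ‖g‖ * ‖z.snd‖ := g.le_opNorm _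
        _ = ‖z.snd‖ := by rw [hg, one_mul]
        _ ≤ ‖z.fst‖ + ‖z.snd‖ := le_add_of_nonneg_left (norm_nonneg _)
    · have := G.le_opNorm p₀
      rw [hGp₀, hp₀norm, mul_one] at this
      simpa using this
  -- core construction
  have main : ∀ ε > 0, ∃ C : Set (WithLp 1 (X × Y)),
      IsCCS C ∧ (0 : WithLp 1 (X × Y)) ∈ C ∧ C ⊆ closedBall 0 ε := by
    intro ε hε
    obtain ⟨δ₀, hδ₀, hδ₀close⟩ := quant (ε / 2) (by linarith)
    set δ : ℝ := min δ₀ (ε / 2) with hδdef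
    have hδpos : 0 < δ := lt_min hδ₀ (by linarith)
    have hδle₀ : δ ≤ δ₀ := min_le_left _ _
    have hδleε : δ ≤ ε / 2 := min_le_right _ _
    -- closeness of points in the slices
    have close1 : ∀ z ∈ sliceSet G δ, ‖z - p₀‖ ≤ ε := by
      rintro z ⟨hz1, hz2⟩
      rw [mem_closedBall_zero_iff] at hz1
      rw [hGapp] at hz2
      have hsnd1 : ‖z.snd‖ ≤ 1 := by
        have := hnorm z; linarith [norm_nonneg z.fst]
      have hclose : ‖z.snd - y₀‖ < ε / 2 :=
        hδ₀close z.snd hsnd1 (lt_of_le_of_lt (by linarith) hz2)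
      have hfst : ‖z.fst‖ < ε / 2 := by
        have h1 := hnorm z
        have h2 := hgle z.snd
        linarith
      have : ‖z - p₀‖ = ‖z.fst‖ + ‖z.snd - y₀‖ := by
        rw [hnorm (z - p₀)]
        have e1 : (z - p₀).fst = z.fst := by
          show z.fst - (0 : X) = z.fst; rw [sub_zero]
        have e2 : (z - p₀).snd = z.snd - y₀ := rfl
        rw [e1, e2]
      linarith
    have close2 : ∀ z ∈ sliceSet (-G) δ, ‖z - (-p₀)‖ ≤ ε := by
      rintro z ⟨hz1, hz2⟩
      rw [mem_closedBall_zero_iff] at hz1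
      have hz2' : 1 - δ < g (-z.snd) := by
        have : (-G) z = -g z.snd := by rw [ContinuousLinearMap.neg_apply, hGapp]
        rw [this] at hz2
        rwa [map_neg]
      have hsnd1 : ‖-z.snd‖ ≤ 1 := by
        rw [norm_neg]
        have := hnorm z; linarith [norm_nonneg z.fst]
      have hclose : ‖z.snd + y₀‖ < ε / 2 := by
        have := hδ₀close (-z.snd) hsnd1 (lt_of_le_of_lt (by linarith) hz2')
        rwa [show -z.snd - y₀ = -(z.snd + y₀) by abel, norm_neg] at this
      have hfst : ‖z.fst‖ < ε / 2 := by
        have h1 := hnorm z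
        have h2 := hgle (-z.snd)
        rw [norm_neg, map_neg] at h2
        have h3 : (-G) z = -g z.snd := by rw [ContinuousLinearMap.neg_apply, hGapp]
        rw [h3] at hz2
        rw [map_neg] at hz2'
        linarith
      have : ‖z - (-p₀)‖ = ‖z.fst‖ + ‖z.snd + y₀‖ := by
        rw [hnorm (z - (-p₀))]
        have e1 : (z - (-p₀)).fst = z.fst := by
          show z.fst - -(0 : X) = z.fst; rw [neg_zero, sub_zero]
        have e2 : (z - (-p₀)).snd = z.snd + y₀ := by
          show z.snd - -y₀ = z.snd + y₀; rw [sub_neg_eq_add]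
        rw [e1, e2]
      linarith
    refine ⟨(2⁻¹ : ℝ) • sliceSet G δ + (2⁻¹ : ℝ) • sliceSet (-G) δ, ?_, ?_, ?_⟩
    · refine ⟨2, ![2⁻¹, 2⁻¹], ![sliceSet G δ, sliceSet (-G) δ], ?_, ?_, ?_, ?_⟩
      · intro i; fin_cases i <;> norm_num
      · simp [Fin.sum_univ_two]; norm_num
      · intro i; fin_cases i
        · exact ⟨G, δ, hGnorm, hδpos, rfl⟩
        · exact ⟨-G, δ, by rw [norm_neg, hGnorm], hδpos, rfl⟩
      · simp [Fin.sum_univ_two]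
    · have hmem1 : p₀ ∈ sliceSet G δ := by
        refine ⟨mem_closedBall_zero_iff.mpr hp₀norm.le, ?_⟩
        rw [hGp₀]; linarith
      have hmem2 : -p₀ ∈ sliceSet (-G) δ := by
        constructor
        · rw [mem_closedBall_zero_iff, norm_neg, hp₀norm]
        · rw [ContinuousLinearMap.neg_apply, map_neg, hGp₀, neg_neg]; linarith
      have h0 : (0 : WithLp 1 (X × Y)) = (2⁻¹ : ℝ) • p₀ + (2⁻¹ : ℝ) • (-p₀) := by module
      rw [h0]
      exact Set.add_mem_add (Set.smul_mem_smul_set hmem1) (Set.smul_mem_smul_set hmem2)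
    · rintro z hz
      rw [Set.mem_add] at hz
      obtain ⟨a, ha, b, hb, hab⟩ := hz
      obtain ⟨u, hu, rfl⟩ := ha
      obtain ⟨v, hv, rfl⟩ := hb
      rw [mem_closedBall_zero_iff]
      have hzeq : (2⁻¹ : ℝ) • u + (2⁻¹ : ℝ) • v
          = (2⁻¹ : ℝ) • (u - p₀) + (2⁻¹ : ℝ) • (v - (-p₀)) := by module
      rw [← hab, hzeq]
      calc ‖(2⁻¹ : ℝ) • (u - p₀) + (2⁻¹ : ℝ) • (v - (-p₀))‖
          ≤ ‖(2⁻¹ : ℝ) • (u - p₀)‖ + ‖(2⁻¹ : ℝ) • (v - (-p₀))‖ := norm_add_le _ _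
        _ = 2⁻¹ * ‖u - p₀‖ + 2⁻¹ * ‖v - (-p₀)‖ := by
            rw [norm_smul, norm_smul]; norm_num
        _ ≤ 2⁻¹ * ε + 2⁻¹ * ε := by
            have h1 := close1 u hu
            have h2 := close2 v hv
            have : (0:ℝ) < 2⁻¹ := by norm_num
            nlinarith
        _ = ε := by ring
  -- conclusions
  have mainDiam : ∀ ε > 0, ∃ C : Set (WithLp 1 (X × Y)),
      IsCCS C ∧ (0 : WithLp 1 (X × Y)) ∈ C ∧ C ⊆ closedBall 0 ε ∧
        Metric.diam C ≤ 2 * ε := by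
    intro ε hε
    obtain ⟨C, hC1, hC2, hC3⟩ := main ε hε
    refine ⟨C, hC1, hC2, hC3, ?_⟩
    calc Metric.diam C ≤ Metric.diam (closedBall (0 : WithLp 1 (X × Y)) ε) :=
          Metric.diam_mono hC3 isBounded_closedBall
      _ ≤ 2 * ε := Metric.diam_closedBall hε.le
  refine ⟨?_, ?_, ?_⟩
  · intro ε hε
    obtain ⟨C, hC1, hC2, _, hC4⟩ := mainDiam ε hε
    exact ⟨C, hC1, hC2, by linarith⟩
  · obtain ⟨C, hC1, _, _, hC4⟩ := mainDiam (1/2) (by norm_num)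
    exact ⟨C, hC1, by linarith⟩
  · intro z hz hDaug
    obtain ⟨C, hC1, hC2, hC3, _⟩ := mainDiam (1/8) (by norm_num)
    obtain ⟨y, hy, hlt⟩ := hDaug C hC1 (1/2) (by norm_num)
    have hynorm : ‖y‖ ≤ 1/8 := mem_closedBall_zero_iff.mp (hC3 hy)
    have : ‖z - y‖ ≤ ‖z‖ + ‖y‖ := norm_sub_le _ _
    rw [hz] at this
    linarith
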